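/- For every natural number function f computed by a Turing machine (equivalently, every partial recursive total function f), there is a program P extending the defining equations by f(x⃗) = h(k(g(x⃗,y), x⃗, y)) and k(0, x⃗, y) = y — where g is a function symbol for the primitive recursive Kleene T-predicate characteristic function and h extracts the output of a computation trace — such that the standard model ℕ satisfies P when f interprets the symbol f and k is interpreted by k(z, x⃗, u) = u if z = 0 and otherwise the unique y with g(x⃗, y) = 0; hence P is strongly coherent. -/

import Mathlib

open FirstOrder Language

universe u v

namespace PRFpaper

variable (L : FirstOrder.Language.{u, v})

/-- The term `0`. -/
def zeroT (c0 : L.Constants) {α : Type} : L.Term α := Term.func c0 ![]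

/-- The term `S t`. -/
def succT (s1 : L.Functions 1) {α : Type} (t : L.Term α) : L.Term α := Term.func s1 ![t]

/-- The numeral `n̄`: `S` applied `n` times to `0`. -/
def num (c0 : L.Constants) (s1 : L.Functions 1) {α : Type} : ℕ → L.Term α
  | 0 => zeroT L c0
  | n + 1 => succT L s1 (num c0 s1 n)

/-- A program: a set of equations, given as pairs of terms with variables in `ℕ`. -/
abbrev Program := Set (L.Term ℕ × L.Term ℕ)

/-- Derivability in equational logic from the program `P`: the equations of `P`,
reflexivity, substitution of arbitrary terms for variables, and replacement of
equal subterms (which generates symmetry, transitivity and congruence). -/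
inductive EqDeriv (P : Program L) : L.Term ℕ → L.Term ℕ → Prop
  | ax {s t : L.Term ℕ} : (s, t) ∈ P → EqDeriv P s t
  | refl (t : L.Term ℕ) : EqDeriv P t t
  | subst {s t : L.Term ℕ} (σ : ℕ → L.Term ℕ) :
      EqDeriv P s t → EqDeriv P (s.subst σ) (t.subst σ)
  | symm {s t : L.Term ℕ} : EqDeriv P s t → EqDeriv P t s
  | trans {s t r : L.Term ℕ} : EqDeriv P s t → EqDeriv P t r → EqDeriv P s r
  | congr {n : ℕ} (f : L.Functions n) (ts us : Fin n → L.Term ℕ) :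
      (∀ i, EqDeriv P (ts i) (us i)) → EqDeriv P (Term.func f ts) (Term.func f us)

/-- `P` is coherent: it derives no equation between two distinct numerals. -/
def Coherent (c0 : L.Constants) (s1 : L.Functions 1) (P : Program L) : Prop :=
  ∀ m n : ℕ, m ≠ n → ¬ EqDeriv L P (num L c0 s1 m) (num L c0 s1 n)

section Semantics

variable (c0 : L.Constants) (s1 : L.Functions 1)
variable (M : Type w) [L.Structure M]

/-- The interpretation of `0` in `M`. -/
def zeroM : M := Structure.funMap c0 Matrix.vecEmpty

/-- The interpretation of `S` in `M`. -/
def succM (x : M) : M := Structure.funMap s1 ![x]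

/-- `M` satisfies (the universal closures of) all equations of `P`. -/
def SatP (P : Program L) : Prop :=
  ∀ e ∈ P, ∀ v : ℕ → M, Term.realize v e.1 = Term.realize v e.2

/-- `M` satisfies the separation axioms `∀x (S x ≠ 0)` and `∀x∀y (S x = S y → x = y)`. -/
def SatSep : Prop :=
  (∀ x : M, succM L s1 M x ≠ zeroM L c0 M) ∧
  (∀ x y : M, succM L s1 M x = succM L s1 M y → x = y)

/-- `M` satisfies every instance of the first-order induction schema
`A[0] → (∀x (A[x] → A[S x])) → ∀x A[x]`. -/
def SatInd : Prop :=
  ∀ (φ : L.BoundedFormula ℕ 1) (v : ℕ → M),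
    φ.Realize v ![zeroM L c0 M] →
    (∀ x : M, φ.Realize v ![x] → φ.Realize v ![succM L s1 M x]) →
    ∀ x : M, φ.Realize v ![x]

end Semantics

/-- `P` is strongly coherent: the theory `A(P)` (universal closures of the
equations of `P`, the separation axioms and full first-order induction) is
consistent, i.e. (by completeness) has a model. -/
def StronglyCoherent (c0 : L.Constants) (s1 : L.Functions 1) (P : Program L) : Prop :=
  ∃ (M : Type (max u v)) (_ : L.Structure M), Nonempty M ∧
    SatP L M P ∧ SatSep L c0 s1 M ∧ SatInd L c0 s1 M

/-- Instantiation of the (outermost) bound variable of a formula with one free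
bound variable by a term. -/
def inst1 (φ : L.BoundedFormula ℕ 1) (t : L.Term ℕ) : L.Formula ℕ :=
  φ.toFormula.subst (Sum.elim Term.var fun _ => t)

/-- Substitute the bound variable of `φ` by a term possibly mentioning the bound
variable, staying a formula with one bound-variable slot. -/
def bsubst (φ : L.BoundedFormula ℕ 1) (t : L.Term (ℕ ⊕ Fin 1)) : L.BoundedFormula ℕ 1 :=
  (φ.toFormula.subst (Sum.elim (fun i => Term.var (Sum.inl i)) fun _ => t)).relabel id

/-- `φ[S x / x]` for the bound variable `x`. -/
def shiftS (s1 : L.Functions 1) (φ : L.BoundedFormula ℕ 1) : L.BoundedFormula ℕ 1 :=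
  bsubst L φ (succT L s1 (Term.var (Sum.inr 0)))

/-- Basic terms: built only from `0`, `S` and variables. -/
inductive IsBasic (c0 : L.Constants) (s1 : L.Functions 1) : L.Term ℕ → Prop
  | var (x : ℕ) : IsBasic c0 s1 (Term.var x)
  | zero : IsBasic c0 s1 (zeroT L c0)
  | succ {t : L.Term ℕ} : IsBasic c0 s1 t → IsBasic c0 s1 (succT L s1 t)

/-- Classical natural deduction with equality, from a theory `T` (whose members
behave as universally closed axioms: their free variables are never eigenvariables)
and open assumptions `Γ`, where the terms used in universal elimination and
existential introduction are restricted to the class `B`. -/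
inductive Prv (B : L.Term ℕ → Prop) (T : Set (L.Formula ℕ)) :
    Set (L.Formula ℕ) → L.Formula ℕ → Prop
  | ax {Γ φ} : φ ∈ T → Prv B T Γ φ
  | hyp {Γ φ} : φ ∈ Γ → Prv B T Γ φ
  | impI {Γ φ ψ} : Prv B T (insert φ Γ) ψ → Prv B T Γ (φ.imp ψ)
  | impE {Γ φ ψ} : Prv B T Γ (φ.imp ψ) → Prv B T Γ φ → Prv B T Γ ψ
  | botE {Γ φ} : Prv B T Γ ⊥ → Prv B T Γ φ
  | dne {Γ φ} : Prv B T Γ φ.not.not → Prv B T Γ φ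
  | allI {Γ} {φ : L.BoundedFormula ℕ 1} {y : ℕ} :
      Prv B T Γ (inst1 L φ (Term.var y)) →
      (∀ ψ ∈ Γ, y ∉ ψ.freeVarFinset) → y ∉ φ.all.freeVarFinset →
      Prv B T Γ φ.all
  | allE {Γ} {φ : L.BoundedFormula ℕ 1} {t} :
      B t → Prv B T Γ φ.all → Prv B T Γ (inst1 L φ t)
  | exI {Γ} {φ : L.BoundedFormula ℕ 1} {t} :
      B t → Prv B T Γ (inst1 L φ t) → Prv B T Γ φ.ex
  | exE {Γ C} {φ : L.BoundedFormula ℕ 1} {y : ℕ} :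
      Prv B T Γ φ.ex → Prv B T (insert (inst1 L φ (Term.var y)) Γ) C →
      (∀ ψ ∈ Γ, y ∉ ψ.freeVarFinset) → y ∉ φ.all.freeVarFinset → y ∉ C.freeVarFinset →
      Prv B T Γ C
  | eqRefl (Γ) (t : L.Term ℕ) : Prv B T Γ (Term.equal t t)
  | eqSubst {Γ} {φ : L.BoundedFormula ℕ 1} {t s : L.Term ℕ} :
      Prv B T Γ (Term.equal t s) → Prv B T Γ (inst1 L φ t) → Prv B T Γ (inst1 L φ s)

/-- The equation `s = t` as a formula (an axiom with free variables, behaving as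
its universal closure). -/
def eqAx (e : L.Term ℕ × L.Term ℕ) : L.Formula ℕ := Term.equal e.1 e.2

/-- The separation axiom `∀x (S x ≠ 0)`. -/
def sepAx1 (c0 : L.Constants) (s1 : L.Functions 1) : L.Formula ℕ :=
  (BoundedFormula.equal (succT L s1 (Term.var (Sum.inr 0))) (zeroT L c0)).not.all

/-- The separation axiom `∀x∀y (S x = S y → x = y)`. -/
def sepAx2 (s1 : L.Functions 1) : L.Formula ℕ :=
  (((BoundedFormula.equal (succT L s1 (Term.var (Sum.inr 0)))
      (succT L s1 (Term.var (Sum.inr 1)))).imp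
    (BoundedFormula.equal (Term.var (Sum.inr (0 : Fin 2))) (Term.var (Sum.inr 1)))).all).all

/-- The induction axiom for the formula `φ`:
`φ[0] → (∀x (φ[x] → φ[S x])) → ∀x φ[x]`. -/
def indAx (c0 : L.Constants) (s1 : L.Functions 1) (φ : L.BoundedFormula ℕ 1) : L.Formula ℕ :=
  (inst1 L φ (zeroT L c0)).imp (((φ.imp (shiftS L s1 φ)).all).imp φ.all)

/-- The axioms of the theory `A(P)`. -/
def TheoryAP (c0 : L.Constants) (s1 : L.Functions 1) (P : Program L) : Set (L.Formula ℕ) :=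
  {φ | ∃ e ∈ P, φ = eqAx L e} ∪ {sepAx1 L c0 s1, sepAx2 L s1} ∪
    Set.range (indAx L c0 s1)

end PRFpaper

namespace PRFpaper

/-- Function symbols for Statement 6: `0`, `S`, unary `f`, binary `g`, unary `h`,
ternary `k`. -/
inductive L6F : ℕ → Type
  | z : L6F 0
  | s : L6F 1
  | f : L6F 1
  | g : L6F 2
  | h : L6F 1
  | k : L6F 3

/-- The language of Statement 6. -/
def L6 : FirstOrder.Language := ⟨L6F, fun _ => Empty⟩

def L6z : L6.Constants := L6F.z
def L6s : L6.Functions 1 := L6F.s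
def L6f : L6.Functions 1 := L6F.f
def L6g : L6.Functions 2 := L6F.g
def L6h : L6.Functions 1 := L6F.h
def L6k : L6.Functions 3 := L6F.k

/-- The standard structure on `ℕ` interpreting `f, g, h, k` by the given
functions and `0`, `S` standardly. -/
def struc6 (f : ℕ → ℕ) (g : ℕ → ℕ → ℕ) (h : ℕ → ℕ) (k : ℕ → ℕ → ℕ → ℕ) :
    L6.Structure ℕ where
  funMap {n} s := match s with
    | .z => fun _ => 0
    | .s => fun a => a 0 + 1
    | .f => fun a => f (a 0)
    | .g => fun a => g (a 0) (a 1)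
    | .h => fun a => h (a 0)
    | .k => fun a => k (a 0) (a 1) (a 2)
  RelMap r := r.elim

/-- The program `{ f(x) = h(k(g(x,y),x,y)),  k(0,x,y) = y }`. -/
def P6 : Program L6 :=
  {(Term.func L6f ![Term.var 0],
     Term.func L6h ![(Term.func L6k
       ![Term.func L6g ![Term.var 0, Term.var 1], Term.var 0, Term.var 1])]),
   (Term.func L6k ![zeroT L6 L6z, Term.var 0, Term.var 1], Term.var 1)}

open Nat.Partrec (Code)
open Nat.Partrec.Code in
theorem stmt6 (f : ℕ → ℕ) (hf : Computable f) :
    ∃ (g : ℕ → ℕ → ℕ) (h : ℕ → ℕ) (k : ℕ → ℕ → ℕ → ℕ),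
      Primrec₂ g ∧ Primrec h ∧
      (∀ x, ∃! y, g x y = 0) ∧
      (∀ x y, g x y = 0 → f x = h y) ∧
      (∀ x u, k 0 x u = u) ∧
      (∀ z x u, z ≠ 0 → g x (k z x u) = 0) ∧
      (letI : L6.Structure ℕ := struc6 f g h k
       SatP L6 ℕ P6) ∧
      StronglyCoherent L6 L6z L6s P6 := by
  obtain ⟨c, hc⟩ := exists_code.1 (Partrec.nat_iff.1 hf.partrec)
  have hfx : ∀ x, f x ∈ eval c x := by
    intro x; rw [hc]; exact Part.mem_some _
  have hex : ∀ x, ∃ s, (evaln s c x).isSome := by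
    intro x
    obtain ⟨s, hs⟩ := evaln_complete.1 (hfx x)
    exact ⟨s, by rw [Option.isSome_iff_exists]; exact ⟨_, hs⟩⟩
  have hzero : ∀ x, evaln 0 c x = Option.none := fun _ => by simp [Nat.Partrec.Code.evaln]
  set g : ℕ → ℕ → ℕ := fun x y =>
    if evaln y.unpair.1 c x = Option.some y.unpair.2 ∧
       evaln (y.unpair.1 - 1) c x = Option.none then 0 else 1 with hgdef
  set h : ℕ → ℕ := fun y => y.unpair.2 with hhdef
  set y0 : ℕ → ℕ := fun x => Nat.pair (Nat.find (hex x)) (f x) with hy0def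
  set k : ℕ → ℕ → ℕ → ℕ := fun z x u => if z = 0 then u else y0 x with hkdef
  -- value extraction
  have hval : ∀ {s x v}, evaln s c x = Option.some v → v = f x := by
    intro s x v hv
    have : v ∈ eval c x := evaln_sound hv
    rw [hc] at this
    exact (Part.mem_some_iff.1 this)
  have hfind : ∀ x, evaln (Nat.find (hex x)) c x = Option.some (f x) := by
    intro x
    obtain ⟨v, hv⟩ := Option.isSome_iff_exists.1 (Nat.find_spec (hex x))
    rwa [hval hv] at hv
  have hfindpos : ∀ x, 0 < Nat.find (hex x) := by
    intro x
    rcases Nat.eq_zero_or_pos (Nat.find (hex x)) with hp | hp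
    · have := Nat.find_spec (hex x); rw [hp, hzero] at this; simp at this
    · exact hp
  have hgy0 : ∀ x, g x (y0 x) = 0 := by
    intro x
    have h1 : evaln (Nat.find (hex x) - 1) c x = Option.none := by
      rw [← Option.not_isSome_iff_eq_none]
      exact Nat.find_min (hex x) (Nat.sub_lt (hfindpos x) one_pos)
    simp only [hgdef, hy0def, Nat.unpair_pair]
    rw [if_pos ⟨hfind x, h1⟩]
  have huniq : ∀ x y, g x y = 0 → y = y0 x := by
    intro x y hy
    simp only [hgdef] at hy
    split_ifs at hy with hcond
    obtain ⟨h1, h2⟩ := hcond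
    have hv : y.unpair.2 = f x := hval h1
    have hs1 : Nat.find (hex x) ≤ y.unpair.1 :=
      Nat.find_min' (hex x) (by rw [h1]; rfl)
    have hs2 : ¬ Nat.find (hex x) < y.unpair.1 := by
      intro hlt
      have hle : Nat.find (hex x) ≤ y.unpair.1 - 1 := Nat.le_sub_one_of_lt hlt
      obtain ⟨v, hv'⟩ := Option.isSome_iff_exists.1 (Nat.find_spec (hex x))
      have := evaln_mono hle hv'
      rw [h2] at this; simp at this
    have hs : y.unpair.1 = Nat.find (hex x) := le_antisymm (not_lt.1 hs2) hs1
    calc y = Nat.pair y.unpair.1 y.unpair.2 := (Nat.pair_unpair y).symm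
      _ = y0 x := by rw [hs, hv]
  have hextract : ∀ x y, g x y = 0 → f x = h y := by
    intro x y hy
    rw [huniq x y hy]
    simp [hhdef, hy0def]
  have hgprim : Primrec₂ g := by
    have hev : Primrec fun p : ℕ × ℕ => evaln p.2.unpair.1 c p.1 :=
      primrec_evaln.comp
        (((Primrec.fst.comp (Primrec.unpair.comp Primrec.snd)).pair
          (Primrec.const c)).pair Primrec.fst)
    have hev2 : Primrec fun p : ℕ × ℕ => evaln (p.2.unpair.1 - 1) c p.1 :=
      primrec_evaln.comp
        ((((Primrec.nat_sub.comp (Primrec.fst.comp (Primrec.unpair.comp Primrec.snd))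
            (Primrec.const 1))).pair
          (Primrec.const c)).pair Primrec.fst)
    have hcond : PrimrecPred fun p : ℕ × ℕ =>
        evaln p.2.unpair.1 c p.1 = Option.some p.2.unpair.2 ∧
        evaln (p.2.unpair.1 - 1) c p.1 = Option.none := by
      refine PrimrecPred.and ?_ ?_
      · exact Primrec.eq.comp hev
          (Primrec.option_some.comp (Primrec.snd.comp (Primrec.unpair.comp Primrec.snd)))
      · exact Primrec.eq.comp hev2 (Primrec.const Option.none)
    exact Primrec.ite hcond (Primrec.const 0) (Primrec.const 1)
  have hhprim : Primrec h := Primrec.snd.comp Primrec.unpair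
  have hgk : ∀ z x u, z ≠ 0 → g x (k z x u) = 0 := by
    intro z x u hz
    simp only [hkdef, if_neg hz]
    exact hgy0 x
  have hk0 : ∀ x u, k 0 x u = u := by intro x u; simp [hkdef]
  letI : L6.Structure ℕ := struc6 f g h k
  have hsatP : SatP L6 ℕ P6 := by
    intro e he v
    rcases he with he | he <;> subst he
    · show f (v 0) = h (k (g (v 0) (v 1)) (v 0) (v 1))
      by_cases hg0 : g (v 0) (v 1) = 0
      · rw [hg0, hk0]
        exact hextract _ _ hg0
      · exact hextract _ _ (hgk _ _ _ hg0)
    · show k 0 (v 0) (v 1) = v 1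
      exact hk0 _ _
  refine ⟨g, h, k, hgprim, hhprim, ?_, hextract, hk0, hgk, hsatP, ?_⟩
  · intro x
    exact ⟨y0 x, hgy0 x, fun y hy => huniq x y hy⟩
  · refine ⟨ℕ, inferInstance, ⟨0⟩, hsatP, ⟨?_, ?_⟩, ?_⟩
    · intro x hx
      exact Nat.succ_ne_zero x hx
    · intro x y hxy
      exact Nat.succ_injective hxy
    · intro φ v h0 hstep x
      induction x with
      | zero => exact h0
      | succ n ih => exact hstep n ih

end PRFpaper
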